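/- There exists a K-algebra isomorphism φ : I_n → (I_n)^op (equivalently, a K-linear anti-automorphism of I_n) such that φ(∂_i) = ∫_i, φ(∫_i) = ∂_i and φ(∂_i∘X_i) = ∂_i∘X_i for all 1 ≤ i ≤ n, which is involutive (applying it twice is the identity); moreover φ maps every two-sided ideal a of I_n onto itself (a* = a). In particular the algebra I_n is self-dual, i.e. isomorphic to its opposite algebra. -/

import Mathlib

open MvPolynomial

/-- Multiplication by `x_i`, as a `K`-linear endomorphism of `K[x_1,…,x_n]`. -/
noncomputable def xOp (K : Type*) [Field K] (n : ℕ) (i : Fin n) :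
    Module.End K (MvPolynomial (Fin n) K) :=
  LinearMap.mulLeft K (X i)

/-- The formal partial derivative `∂/∂x_i`. -/
noncomputable def dOp (K : Type*) [Field K] (n : ℕ) (i : Fin n) :
    Module.End K (MvPolynomial (Fin n) K) :=
  (pderiv i).toLinearMap

/-- The integration operator `∫_i`, determined by `∫_i(x^α) = x^α·x_i/(α_i+1)`. -/
noncomputable def intOp (K : Type*) [Field K] (n : ℕ) (i : Fin n) :
    Module.End K (MvPolynomial (Fin n) K) :=
  (basisMonomials (Fin n) K).constr K
    (fun α => (((α i : ℕ) : K) + 1)⁻¹ • (monomial (α + Finsupp.single i 1) (1 : K)))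

/-- The algebra `I_n` of polynomial integro-differential operators:
the `K`-subalgebra of `End_K(P_n)` generated by the `X_i`, `∂_i` and `∫_i`. -/
noncomputable def IDO (K : Type*) [Field K] (n : ℕ) :
    Subalgebra K (Module.End K (MvPolynomial (Fin n) K)) :=
  Algebra.adjoin K (Set.range (xOp K n) ∪ Set.range (dOp K n) ∪ Set.range (intOp K n))

/-- `X_i` as an element of `I_n`. -/
noncomputable def xElt (K : Type*) [Field K] (n : ℕ) (i : Fin n) : IDO K n :=
  ⟨xOp K n i, Algebra.subset_adjoin (Or.inl (Or.inl ⟨i, rfl⟩))⟩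

/-- `∂_i` as an element of `I_n`. -/
noncomputable def dElt (K : Type*) [Field K] (n : ℕ) (i : Fin n) : IDO K n :=
  ⟨dOp K n i, Algebra.subset_adjoin (Or.inl (Or.inr ⟨i, rfl⟩))⟩

/-- `∫_i` as an element of `I_n`. -/
noncomputable def intElt (K : Type*) [Field K] (n : ℕ) (i : Fin n) : IDO K n :=
  ⟨intOp K n i, Algebra.subset_adjoin (Or.inr ⟨i, rfl⟩)⟩

set_option linter.unusedSectionVars false
set_option synthInstance.maxHeartbeats 1000000
set_option maxHeartbeats 1000000

namespace St19

variable (K : Type*) [Field K] [CharZero K] {n : ℕ}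

/-- the weight `∏ (α_i!)²` -/
noncomputable def w (α : Fin n →₀ ℕ) : K := ∏ i, ((Nat.factorial (α i) : K))^2

lemma w_ne_zero (α : Fin n →₀ ℕ) : w K α ≠ 0 := by
  refine Finset.prod_ne_zero_iff.2 fun i _ => ?_
  exact pow_ne_zero _ (Nat.cast_ne_zero.2 (Nat.factorial_ne_zero _))

lemma w_add_single (α : Fin n →₀ ℕ) (i : Fin n) :
    w K (α + Finsupp.single i 1) = (((α i : ℕ) : K) + 1)^2 * w K α := by
  classical
  unfold w
  have h1 : ∀ j ∈ Finset.univ, ((Nat.factorial ((α + Finsupp.single i 1 : Fin n →₀ ℕ) j) : K))^2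
      = (if j = i then (((α i : ℕ) : K) + 1)^2 else 1) * ((Nat.factorial (α j) : K))^2 := by
    intro j _
    by_cases hj : j = i
    · subst hj
      rw [if_pos rfl, Finsupp.add_apply, Finsupp.single_apply, if_pos rfl, Nat.factorial_succ]
      push_cast
      ring
    · rw [if_neg hj, Finsupp.add_apply, Finsupp.single_apply, if_neg (fun h => hj h.symm)]
      simp
  rw [Finset.prod_congr rfl h1, Finset.prod_mul_distrib, Finset.prod_ite_eq' Finset.univ i
    (fun _ => (((α i : ℕ) : K) + 1)^2), if_pos (Finset.mem_univ i)]

/-- the symmetric bilinear form with `B(x^α, x^β) = δ_{αβ} w α`. -/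
noncomputable def BF : MvPolynomial (Fin n) K →ₗ[K] MvPolynomial (Fin n) K →ₗ[K] K :=
  (basisMonomials (Fin n) K).constr K (fun α => w K α • lcoeff K α)

lemma BF_monomial_left (α : Fin n →₀ ℕ) (q : MvPolynomial (Fin n) K) :
    BF K (monomial α 1) q = w K α * coeff α q := by
  have : (monomial α (1:K)) = basisMonomials (Fin n) K α := by
    rw [coe_basisMonomials]
  rw [this]
  unfold BF
  rw [Module.Basis.constr_basis]
  simp [lcoeff_apply]

lemma BF_symm (p q : MvPolynomial (Fin n) K) : BF K p q = BF K q p := by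
  have h : BF K (n := n) = (BF K (n := n)).flip := by
    apply (basisMonomials (Fin n) K).ext; intro α
    apply (basisMonomials (Fin n) K).ext; intro β
    simp only [LinearMap.flip_apply, coe_basisMonomials]
    rw [BF_monomial_left, BF_monomial_left, coeff_monomial, coeff_monomial]
    by_cases h : α = β
    · subst h; simp
    · rw [if_neg h, if_neg (fun hh => h hh.symm)]; simp
  conv_lhs => rw [h]
  rfl

lemma BF_monomial_right (p : MvPolynomial (Fin n) K) (β : Fin n →₀ ℕ) :
    BF K p (monomial β 1) = w K β * coeff β p := by
  rw [BF_symm, BF_monomial_left]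

/-- `S` is the adjoint of `T` with respect to `BF`. -/
def Adj (T S : Module.End K (MvPolynomial (Fin n) K)) : Prop :=
  ∀ p q, BF K (T p) q = BF K p (S q)

variable {K}

lemma adj_of_monomials {T S : Module.End K (MvPolynomial (Fin n) K)}
    (h : ∀ α β : Fin n →₀ ℕ,
      w K β * coeff β (T (monomial α 1)) = w K α * coeff α (S (monomial β 1))) :
    Adj K T S := by
  have h1 : (BF K) ∘ₗ T = (BF K).compl₂ S := by
    apply (basisMonomials (Fin n) K).ext; intro α
    apply (basisMonomials (Fin n) K).ext; intro β
    simp only [LinearMap.comp_apply, LinearMap.compl₂_apply, coe_basisMonomials]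
    rw [BF_monomial_right, BF_monomial_left]
    exact h α β
  intro p q
  have := LinearMap.congr_fun (LinearMap.congr_fun h1 p) q
  simpa using this

lemma adj_mono_eq {T S : Module.End K (MvPolynomial (Fin n) K)} (h : Adj K T S)
    (α β : Fin n →₀ ℕ) :
    w K β * coeff β (T (monomial α 1)) = w K α * coeff α (S (monomial β 1)) := by
  have := h (monomial α 1) (monomial β 1)
  rwa [BF_monomial_right, BF_monomial_left] at this

lemma adj_unique {T S S' : Module.End K (MvPolynomial (Fin n) K)}
    (h : Adj K T S) (h' : Adj K T S') : S = S' := by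
  apply LinearMap.ext; intro q
  apply MvPolynomial.ext; intro α
  have e1 := h (monomial α 1) q
  have e2 := h' (monomial α 1) q
  rw [BF_monomial_left] at e1 e2
  have := e1.symm.trans e2
  exact mul_left_cancel₀ (w_ne_zero K α) this

lemma adj_symm {T S : Module.End K (MvPolynomial (Fin n) K)} (h : Adj K T S) : Adj K S T := by
  intro p q
  rw [BF_symm, ← h q p, BF_symm]

lemma adj_one : Adj K (1 : Module.End K (MvPolynomial (Fin n) K)) 1 := fun _ _ => rfl

lemma adj_zero : Adj K (0 : Module.End K (MvPolynomial (Fin n) K)) 0 := by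
  intro p q; simp

lemma adj_mul {T S T' S' : Module.End K (MvPolynomial (Fin n) K)}
    (h : Adj K T S) (h' : Adj K T' S') : Adj K (T * T') (S' * S) := by
  intro p q
  rw [Module.End.mul_apply, Module.End.mul_apply, h, h']

lemma adj_add {T S T' S' : Module.End K (MvPolynomial (Fin n) K)}
    (h : Adj K T S) (h' : Adj K T' S') : Adj K (T + T') (S + S') := by
  intro p q
  simp only [LinearMap.add_apply, map_add, LinearMap.add_apply]
  rw [h, h']

lemma adj_smul {T S : Module.End K (MvPolynomial (Fin n) K)} (c : K)
    (h : Adj K T S) : Adj K (c • T) (c • S) := by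
  intro p q
  simp only [LinearMap.smul_apply, map_smul, LinearMap.smul_apply, smul_eq_mul]
  rw [h]

lemma adj_sum {ι : Type*} (s : Finset ι) (T S : ι → Module.End K (MvPolynomial (Fin n) K))
    (h : ∀ d ∈ s, Adj K (T d) (S d)) : Adj K (∑ d ∈ s, T d) (∑ d ∈ s, S d) := by
  classical
  induction s using Finset.induction_on with
  | empty => simpa using adj_zero
  | insert _ _ hx ih =>
    rw [Finset.sum_insert hx, Finset.sum_insert hx]
    exact adj_add (h _ (Finset.mem_insert_self _ _))
      (ih fun d hd => h d (Finset.mem_insert_of_mem hd))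

end St19

namespace St19

variable {K : Type*} [Field K] [CharZero K] {n : ℕ}

lemma xOp_monomial (i : Fin n) (α : Fin n →₀ ℕ) (c : K) :
    xOp K n i (monomial α c) = monomial (α + Finsupp.single i 1) c := by
  unfold xOp
  rw [LinearMap.mulLeft_apply]
  have hX : (X i : MvPolynomial (Fin n) K) = monomial (Finsupp.single i 1) 1 := rfl
  rw [hX, monomial_mul, one_mul, add_comm]

lemma dOp_monomial (i : Fin n) (α : Fin n →₀ ℕ) (c : K) :
    dOp K n i (monomial α c) = monomial (α - Finsupp.single i 1) (c * (α i : ℕ)) := by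
  unfold dOp
  exact pderiv_monomial

lemma intOp_monomial (i : Fin n) (α : Fin n →₀ ℕ) (c : K) :
    intOp K n i (monomial α c)
      = (((α i : ℕ) : K) + 1)⁻¹ • monomial (α + Finsupp.single i 1) c := by
  have h : monomial α c = c • monomial α (1:K) := by
    rw [← map_smul (monomial α), smul_eq_mul, mul_one]
  rw [h, map_smul]
  have hb : (monomial α (1:K)) = basisMonomials (Fin n) K α := by rw [coe_basisMonomials]
  rw [hb]
  unfold intOp
  rw [Module.Basis.constr_basis]
  rw [smul_comm]
  congr 1
  rw [← map_smul (monomial _), smul_eq_mul, mul_one]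

/-- homogeneity: `T` shifts exponents by `u - v`. -/
def Hmg (u v : Fin n →₀ ℕ) (T : Module.End K (MvPolynomial (Fin n) K)) : Prop :=
  ∀ α β : Fin n →₀ ℕ, coeff β (T (monomial α (1:K))) ≠ 0 → β + v = α + u

lemma hmg_zero (u v : Fin n →₀ ℕ) : Hmg u v (0 : Module.End K (MvPolynomial (Fin n) K)) := by
  intro α β h
  simp at h

lemma hmg_pad {u v t : Fin n →₀ ℕ} {T : Module.End K (MvPolynomial (Fin n) K)} :
    Hmg (u + t) (v + t) T ↔ Hmg u v T := by
  constructor <;> intro h α β hc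
  · have := h α β hc
    rw [← add_assoc, ← add_assoc] at this
    exact add_right_cancel this
  · rw [← add_assoc, ← add_assoc, h α β hc]

lemma hmg_add {u v : Fin n →₀ ℕ} {T T' : Module.End K (MvPolynomial (Fin n) K)}
    (h : Hmg u v T) (h' : Hmg u v T') : Hmg u v (T + T') := by
  intro α β hc
  rw [LinearMap.add_apply, coeff_add] at hc
  rcases (by by_contra hh; push_neg at hh; rw [hh.1, hh.2, add_zero] at hc; exact hc rfl :
    coeff β (T (monomial α (1:K))) ≠ 0 ∨ coeff β (T' (monomial α (1:K))) ≠ 0) with h1 | h1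
  · exact h α β h1
  · exact h' α β h1

lemma hmg_one : Hmg (0 : Fin n →₀ ℕ) 0 (1 : Module.End K (MvPolynomial (Fin n) K)) := by
  intro α β hc
  rw [Module.End.one_apply, coeff_monomial] at hc
  by_cases h : α = β
  · rw [h]
  · rw [if_neg h] at hc; exact absurd rfl hc

lemma hmg_smul (c : K) {u v : Fin n →₀ ℕ} {T : Module.End K (MvPolynomial (Fin n) K)}
    (h : Hmg u v T) : Hmg u v (c • T) := by
  intro α β hc
  rw [LinearMap.smul_apply, coeff_smul] at hc
  exact h α β fun hz => hc (by rw [hz, smul_zero])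

lemma hmg_mul {u v u' v' : Fin n →₀ ℕ} {T T' : Module.End K (MvPolynomial (Fin n) K)}
    (h : Hmg u v T) (h' : Hmg u' v' T') : Hmg (u + u') (v + v') (T * T') := by
  intro α β hc
  rw [Module.End.mul_apply] at hc
  set p := T' (monomial α (1:K)) with hp
  have hrep : T p = ∑ γ ∈ p.support, coeff γ p • T (monomial γ (1:K)) := by
    conv_lhs => rw [← support_sum_monomial_coeff p]
    rw [map_sum]
    refine Finset.sum_congr rfl fun γ _ => ?_
    rw [← map_smul]
    congr 1
    rw [← map_smul (monomial γ), smul_eq_mul, mul_one]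
  rw [hrep, coeff_sum] at hc
  obtain ⟨γ, hγ, hne⟩ := Finset.exists_ne_zero_of_sum_ne_zero hc
  rw [coeff_smul] at hne
  have h1 : coeff β (T (monomial γ (1:K))) ≠ 0 := fun hz => hne (by rw [hz, smul_zero])
  have e1 : β + v = γ + u := h γ β h1
  have e2 : γ + v' = α + u' := h' α γ (by simpa using hγ)
  calc β + (v + v') = (β + v) + v' := by rw [add_assoc]
    _ = (γ + u) + v' := by rw [e1]
    _ = (γ + v') + u := by rw [add_assoc, add_assoc, add_comm u v']
    _ = (α + u') + u := by rw [e2]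
    _ = α + (u + u') := by rw [add_assoc, add_comm u' u]

lemma hmg_x (i : Fin n) : Hmg (Finsupp.single i 1) 0 (xOp K n i) := by
  intro α β hc
  rw [xOp_monomial, coeff_monomial] at hc
  by_cases h : α + Finsupp.single i 1 = β
  · rw [add_zero, ← h]
  · rw [if_neg h] at hc; exact absurd rfl hc

lemma hmg_int (i : Fin n) : Hmg (Finsupp.single i 1) 0 (intOp K n i) := by
  intro α β hc
  rw [intOp_monomial, coeff_smul] at hc
  have h1 : coeff β (monomial (α + Finsupp.single i 1) (1:K)) ≠ 0 :=
    fun hz => hc (by rw [hz, smul_zero])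
  rw [coeff_monomial] at h1
  by_cases h : α + Finsupp.single i 1 = β
  · rw [add_zero, ← h]
  · rw [if_neg h] at h1; exact absurd rfl h1

lemma hmg_d (i : Fin n) : Hmg 0 (Finsupp.single i 1) (dOp K n i) := by
  intro α β hc
  rw [dOp_monomial, coeff_monomial, one_mul] at hc
  by_cases h : α - Finsupp.single i 1 = β
  · rw [if_pos h] at hc
    have hα : α i ≠ 0 := fun hz => hc (by rw [hz]; simp)
    rw [add_zero, ← h]
    exact tsub_add_cancel_of_le (Finsupp.single_le_iff.2 (Nat.one_le_iff_ne_zero.2 hα))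
  · rw [if_neg h] at hc; exact absurd rfl hc

lemma adj_diag {T : Module.End K (MvPolynomial (Fin n) K)} (h : Hmg 0 0 T) : Adj K T T := by
  apply adj_of_monomials
  intro α β
  by_cases hab : α = β
  · subst hab; rfl
  · have h1 : coeff β (T (monomial α (1:K))) = 0 := by
      by_contra h'
      exact hab (by simpa using (h α β h').symm)
    have h2 : coeff α (T (monomial β (1:K))) = 0 := by
      by_contra h'
      exact hab (by simpa using (h β α h'))
    rw [h1, h2, mul_zero, mul_zero]

lemma dOp_mul_intOp (i : Fin n) : dOp K n i * intOp K n i = 1 := by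
  apply (basisMonomials (Fin n) K).ext
  intro β
  rw [coe_basisMonomials]
  show dOp K n i (intOp K n i (monomial β (1:K))) = (1 : Module.End K _) (monomial β (1:K))
  rw [intOp_monomial, map_smul, dOp_monomial, Module.End.one_apply]
  rw [add_tsub_cancel_right]
  have h1 : (β + Finsupp.single i 1 : Fin n →₀ ℕ) i = β i + 1 := by
    rw [Finsupp.add_apply, Finsupp.single_apply, if_pos rfl]
  rw [h1, one_mul, ← map_smul (monomial β), smul_eq_mul]
  congr 1
  push_cast
  exact inv_mul_cancel₀ (Nat.cast_add_one_ne_zero (β i))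

lemma adj_d_int (i : Fin n) : Adj K (dOp K n i) (intOp K n i) := by
  apply adj_of_monomials
  intro α β
  rw [dOp_monomial, intOp_monomial, one_mul, coeff_monomial, coeff_smul, coeff_monomial]
  by_cases h : β + Finsupp.single i 1 = α
  · have hαi : α i = β i + 1 := by
      rw [← h, Finsupp.add_apply, Finsupp.single_apply, if_pos rfl]
    have h2 : α - Finsupp.single i 1 = β := by rw [← h, add_tsub_cancel_right]
    rw [if_pos h2, if_pos h, ← h, w_add_single]
    have happ : ((β + Finsupp.single i 1 : Fin n →₀ ℕ) i) = β i + 1 := by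
      rw [Finsupp.add_apply, Finsupp.single_apply, if_pos rfl]
    rw [happ, smul_eq_mul, mul_one]
    have hne : ((β i : ℕ) : K) + 1 ≠ 0 := Nat.cast_add_one_ne_zero (β i)
    push_cast
    field_simp
  · rw [if_neg h, smul_zero, mul_zero]
    by_cases h2 : α - Finsupp.single i 1 = β
    · by_cases hα : α i = 0
      · rw [if_pos h2, hα]; simp
      · exact absurd (by rw [← h2, tsub_add_cancel_of_le
          (Finsupp.single_le_iff.2 (Nat.one_le_iff_ne_zero.2 hα))]) h
    · rw [if_neg h2, mul_zero]

lemma adj_int_d (i : Fin n) : Adj K (intOp K n i) (dOp K n i) := adj_symm (adj_d_int i)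

lemma adj_x (i : Fin n) : Adj K (xOp K n i) (dOp K n i * xOp K n i * dOp K n i) := by
  apply adj_of_monomials
  intro α β
  rw [xOp_monomial, coeff_monomial]
  rw [show (dOp K n i * xOp K n i * dOp K n i) (monomial β (1:K))
      = dOp K n i (xOp K n i (dOp K n i (monomial β (1:K)))) from rfl]
  rw [dOp_monomial, xOp_monomial, dOp_monomial, one_mul, coeff_monomial]
  by_cases hβ : β i = 0
  · have hne : ¬ α + Finsupp.single i 1 = β := by
      intro h
      have : β i = α i + 1 := by
        rw [← h, Finsupp.add_apply, Finsupp.single_apply, if_pos rfl]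
      omega
    rw [if_neg hne, mul_zero, hβ]
    simp
  · have hrec : β - Finsupp.single i 1 + Finsupp.single i 1 = β :=
      tsub_add_cancel_of_le (Finsupp.single_le_iff.2 (Nat.one_le_iff_ne_zero.2 hβ))
    rw [hrec]
    by_cases h : α + Finsupp.single i 1 = β
    · have h2 : β - Finsupp.single i 1 = α := by rw [← h, add_tsub_cancel_right]
      rw [if_pos h, if_pos h2, ← h, w_add_single]
      have happ : ((α + Finsupp.single i 1 : Fin n →₀ ℕ) i) = α i + 1 := by
        rw [Finsupp.add_apply, Finsupp.single_apply, if_pos rfl]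
      rw [happ]
      push_cast
      ring
    · have h2 : ¬ β - Finsupp.single i 1 = α := by
        intro hh
        exact h (by rw [← hh, hrec])
      rw [if_neg h, if_neg h2, mul_zero, mul_zero]

end St19

namespace St19

variable {K : Type*} [Field K] [CharZero K] {n : ℕ}

lemma hOp_monomial (i : Fin n) (α : Fin n →₀ ℕ) (c : K) :
    (xOp K n i * dOp K n i) (monomial α c) = ((α i : ℕ) : K) • monomial α c := by
  rw [Module.End.mul_apply, dOp_monomial, xOp_monomial]
  by_cases hα : α i = 0
  · rw [hα]
    simp
  · rw [tsub_add_cancel_of_le (Finsupp.single_le_iff.2 (Nat.one_le_iff_ne_zero.2 hα))]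
    rw [← map_smul (monomial α), smul_eq_mul, mul_comm]

lemma commutator_of_hmg {u v : Fin n →₀ ℕ} {T : Module.End K (MvPolynomial (Fin n) K)}
    (h : Hmg u v T) (i : Fin n) :
    (xOp K n i * dOp K n i) * T - T * (xOp K n i * dOp K n i)
      = (((u i : ℕ) : K) - ((v i : ℕ) : K)) • T := by
  apply (basisMonomials (Fin n) K).ext
  intro α
  rw [coe_basisMonomials]
  show (xOp K n i * dOp K n i) (T (monomial α 1)) - T ((xOp K n i * dOp K n i) (monomial α 1))
      = (((u i : ℕ) : K) - ((v i : ℕ) : K)) • T (monomial α 1)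
  rw [hOp_monomial, map_smul]
  set c : K := ((u i : ℕ) : K) - ((v i : ℕ) : K) with hc
  set p := T (monomial α (1:K)) with hp
  have key : (xOp K n i * dOp K n i) p = (((α i : ℕ) : K) + c) • p := by
    conv_lhs => rw [← support_sum_monomial_coeff p]
    rw [map_sum]
    have hterm : ∀ β ∈ p.support, (xOp K n i * dOp K n i) (monomial β (coeff β p))
        = (((α i : ℕ) : K) + c) • monomial β (coeff β p) := by
      intro β hβ
      rw [hOp_monomial]
      have hco : coeff β p ≠ 0 := by simpa using hβ
      have heq : β + v = α + u := h α β hco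
      have heqi : β i + v i = α i + u i := by
        have := DFunLike.congr_fun heq i
        rwa [Finsupp.add_apply, Finsupp.add_apply] at this
      have : ((β i : ℕ) : K) = ((α i : ℕ) : K) + c := by
        rw [hc]
        have hcast : ((β i : ℕ) : K) + ((v i : ℕ) : K)
            = ((α i : ℕ) : K) + ((u i : ℕ) : K) := by exact_mod_cast heqi
        linear_combination hcast
      rw [this]
    rw [Finset.sum_congr rfl hterm, ← Finset.smul_sum, support_sum_monomial_coeff]
  rw [key, add_smul]
  abel

/-- homogeneous of integer degree `d`. -/
def IsHmgZ (d : Fin n → ℤ) (T : Module.End K (MvPolynomial (Fin n) K)) : Prop :=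
  ∃ u v : Fin n →₀ ℕ, (∀ i, (u i : ℤ) - (v i : ℤ) = d i) ∧ Hmg u v T

lemma isHmgZ_zero (d : Fin n → ℤ) :
    IsHmgZ d (0 : Module.End K (MvPolynomial (Fin n) K)) := by
  refine ⟨Finsupp.equivFunOnFinite.symm (fun i => (d i).toNat),
    Finsupp.equivFunOnFinite.symm (fun i => (-(d i)).toNat), fun i => ?_, hmg_zero _ _⟩
  show (((d i).toNat : ℤ)) - (((-(d i)).toNat : ℤ)) = d i
  exact Int.toNat_sub_toNat_neg (d i)

lemma isHmgZ_add {d : Fin n → ℤ} {T T' : Module.End K (MvPolynomial (Fin n) K)}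
    (h : IsHmgZ d T) (h' : IsHmgZ d T') : IsHmgZ d (T + T') := by
  obtain ⟨u, v, hd, hT⟩ := h
  obtain ⟨u', v', hd', hT'⟩ := h'
  have heq : u' + v = u + v' := by
    ext i
    have h1 := hd i
    have h2 := hd' i
    rw [Finsupp.add_apply, Finsupp.add_apply]
    omega
  refine ⟨u + v', v + v', fun i => ?_, ?_⟩
  · rw [Finsupp.add_apply, Finsupp.add_apply]
    have := hd i
    push_cast
    omega
  · refine hmg_add (hmg_pad.2 hT) ?_
    have : Hmg (u' + v) (v' + v) T' := hmg_pad.2 hT'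
    rwa [heq, add_comm v' v] at this

lemma isHmgZ_mul {d e : Fin n → ℤ} {T T' : Module.End K (MvPolynomial (Fin n) K)}
    (h : IsHmgZ d T) (h' : IsHmgZ e T') : IsHmgZ (d + e) (T * T') := by
  obtain ⟨u, v, hd, hT⟩ := h
  obtain ⟨u', v', hd', hT'⟩ := h'
  refine ⟨u + u', v + v', fun i => ?_, hmg_mul hT hT'⟩
  rw [Finsupp.add_apply, Finsupp.add_apply]
  have := hd i
  have := hd' i
  push_cast
  simp only [Pi.add_apply]
  omega

lemma isHmgZ_smul (c : K) {d : Fin n → ℤ} {T : Module.End K (MvPolynomial (Fin n) K)}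
    (h : IsHmgZ d T) : IsHmgZ d (c • T) := by
  obtain ⟨u, v, hd, hT⟩ := h
  exact ⟨u, v, hd, hmg_smul c hT⟩

lemma isHmgZ_sum {ι : Type*} (d : Fin n → ℤ) (s : Finset ι)
    (f : ι → Module.End K (MvPolynomial (Fin n) K))
    (h : ∀ j ∈ s, IsHmgZ d (f j)) : IsHmgZ d (∑ j ∈ s, f j) := by
  classical
  induction s using Finset.induction_on with
  | empty => simpa using isHmgZ_zero d
  | insert _ _ hx ih =>
    rw [Finset.sum_insert hx]
    exact isHmgZ_add (h _ (Finset.mem_insert_self _ _))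
      (ih fun j hj => h j (Finset.mem_insert_of_mem hj))

/-- `T` is a finite sum of homogeneous elements of `IDO`. -/
def Nice (T : Module.End K (MvPolynomial (Fin n) K)) : Prop :=
  ∃ (D : Finset (Fin n → ℤ)) (f : (Fin n → ℤ) → Module.End K (MvPolynomial (Fin n) K)),
    (∀ d, IsHmgZ d (f d) ∧ f d ∈ IDO K n) ∧ (∀ d ∉ D, f d = 0) ∧ T = ∑ d ∈ D, f d

lemma nice_of_gen {T : Module.End K (MvPolynomial (Fin n) K)} (d : Fin n → ℤ)
    (hd : IsHmgZ d T) (hT : T ∈ IDO K n) : Nice T := by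
  classical
  refine ⟨{d}, fun e => if e = d then T else 0, fun e => ?_, fun e he => ?_, ?_⟩
  · show IsHmgZ e (if e = d then T else 0) ∧ (if e = d then T else 0) ∈ IDO K n
    by_cases h : e = d
    · subst h; rw [if_pos rfl]; exact ⟨hd, hT⟩
    · rw [if_neg h]; exact ⟨isHmgZ_zero e, Subalgebra.zero_mem _⟩
  · show (if e = d then T else 0) = 0
    rw [if_neg (by simpa using he)]
  · rw [Finset.sum_singleton]
    show T = if d = d then T else 0
    rw [if_pos rfl]

lemma nice_add {T T' : Module.End K (MvPolynomial (Fin n) K)}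
    (h : Nice T) (h' : Nice T') : Nice (T + T') := by
  classical
  obtain ⟨D, f, hf, hf0, rfl⟩ := h
  obtain ⟨D', f', hf', hf0', rfl⟩ := h'
  refine ⟨D ∪ D', fun d => f d + f' d, fun d => ⟨isHmgZ_add (hf d).1 (hf' d).1,
    Subalgebra.add_mem _ (hf d).2 (hf' d).2⟩, fun d hd => ?_, ?_⟩
  · rw [Finset.mem_union, not_or] at hd
    show f d + f' d = 0
    rw [hf0 d hd.1, hf0' d hd.2, add_zero]
  · rw [Finset.sum_add_distrib]
    congr 1
    · exact Finset.sum_subset Finset.subset_union_left (fun d _ hd => hf0 d hd)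
    · exact Finset.sum_subset Finset.subset_union_right (fun d _ hd => hf0' d hd)

lemma nice_mul {T T' : Module.End K (MvPolynomial (Fin n) K)}
    (h : Nice T) (h' : Nice T') : Nice (T * T') := by
  classical
  obtain ⟨D, f, hf, hf0, rfl⟩ := h
  obtain ⟨D', f', hf', hf0', rfl⟩ := h'
  refine ⟨(D ×ˢ D').image (fun p : (Fin n → ℤ) × (Fin n → ℤ) => p.1 + p.2),
    fun e => ((D ×ˢ D').filter
      (fun p : (Fin n → ℤ) × (Fin n → ℤ) => p.1 + p.2 = e)).sum
      (fun p => f p.1 * f' p.2),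
    fun e => ⟨?_, ?_⟩, fun e he => ?_, ?_⟩
  · refine isHmgZ_sum e _ _ fun p hp => ?_
    rw [Finset.mem_filter] at hp
    rw [← hp.2]
    exact isHmgZ_mul (hf p.1).1 (hf' p.2).1
  · exact Subalgebra.sum_mem _ fun p _ => Subalgebra.mul_mem _ (hf p.1).2 (hf' p.2).2
  · refine Finset.sum_eq_zero fun p hp => ?_
    rw [Finset.mem_filter] at hp
    exact absurd (Finset.mem_image.2 ⟨p, hp.1, hp.2⟩) he
  · rw [Finset.sum_mul_sum]
    rw [← Finset.sum_product']
    exact (Finset.sum_fiberwise_of_maps_to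
      (fun p hp => Finset.mem_image_of_mem _ hp)
      (fun p : (Fin n → ℤ) × (Fin n → ℤ) => f p.1 * f' p.2)).symm

lemma nice_algebraMap (r : K) :
    Nice (algebraMap K (Module.End K (MvPolynomial (Fin n) K)) r) := by
  refine nice_of_gen 0 ?_ (Subalgebra.algebraMap_mem _ r)
  have : algebraMap K (Module.End K (MvPolynomial (Fin n) K)) r = r • 1 :=
    Algebra.algebraMap_eq_smul_one r
  rw [this]
  exact isHmgZ_smul r ⟨0, 0, fun i => by simp, hmg_one⟩

lemma nice_of_mem {T : Module.End K (MvPolynomial (Fin n) K)} (hT : T ∈ IDO K n) : Nice T := by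
  classical
  induction hT using Algebra.adjoin_induction with
  | mem x hx =>
    rcases hx with (⟨i, rfl⟩ | ⟨i, rfl⟩) | ⟨i, rfl⟩
    · exact nice_of_gen (fun j => if j = i then 1 else 0)
        ⟨Finsupp.single i 1, 0, fun j => by
          show (((Finsupp.single i 1 : Fin n →₀ ℕ) j : ℕ) : ℤ) - (((0 : Fin n →₀ ℕ) j : ℕ) : ℤ)
            = if j = i then 1 else 0
          rw [Finsupp.single_apply]
          by_cases h : i = j
          · subst h; simp
          · rw [if_neg h, if_neg (fun hh => h hh.symm)]; simp, hmg_x i⟩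
        (xElt K n i).2
    · exact nice_of_gen (fun j => if j = i then -1 else 0)
        ⟨0, Finsupp.single i 1, fun j => by
          show (((0 : Fin n →₀ ℕ) j : ℕ) : ℤ) - (((Finsupp.single i 1 : Fin n →₀ ℕ) j : ℕ) : ℤ)
            = if j = i then -1 else 0
          rw [Finsupp.single_apply]
          by_cases h : i = j
          · subst h; simp
          · rw [if_neg h, if_neg (fun hh => h hh.symm)]; simp, hmg_d i⟩
        (dElt K n i).2
    · exact nice_of_gen (fun j => if j = i then 1 else 0)
        ⟨Finsupp.single i 1, 0, fun j => by
          show (((Finsupp.single i 1 : Fin n →₀ ℕ) j : ℕ) : ℤ) - (((0 : Fin n →₀ ℕ) j : ℕ) : ℤ)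
            = if j = i then 1 else 0
          rw [Finsupp.single_apply]
          by_cases h : i = j
          · subst h; simp
          · rw [if_neg h, if_neg (fun hh => h hh.symm)]; simp, hmg_int i⟩
        (intElt K n i).2
  | algebraMap r => exact nice_algebraMap r
  | add x y hx hy ihx ihy => exact nice_add ihx ihy
  | mul x y hx hy ihx ihy => exact nice_mul ihx ihy

end St19

namespace St19

section EIG

variable {K : Type*} [Field K] [CharZero K] {A : Type*} [Ring A] [Algebra K A]

lemma smul_mem_tsi (I : TwoSidedIdeal A) (c : K) {x : A} (hx : x ∈ I) : c • x ∈ I := by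
  rw [Algebra.smul_def]
  exact I.mul_mem_left _ _ hx

lemma eig_single {ι : Type*} (I : TwoSidedIdeal A) (h : A) (ev : ι → K)
    (s : Finset ι) : ∀ (x : ι → A), Set.InjOn ev s →
    (∀ j ∈ s, h * x j - x j * h = ev j • x j) →
    (∑ j ∈ s, x j) ∈ I → ∀ j ∈ s, x j ∈ I := by
  classical
  induction s using Finset.induction_on with
  | empty => intro x _ _ _ j hj; simp at hj
  | @insert a s' ha ih =>
    intro x hinj he hs
    rw [Finset.sum_insert ha] at hs
    have hzI : x a + ∑ j ∈ s', x j ∈ I := hs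
    have hw : (h * (x a + ∑ j ∈ s', x j) - (x a + ∑ j ∈ s', x j) * h
        - ev a • (x a + ∑ j ∈ s', x j)) ∈ I :=
      I.sub_mem (I.sub_mem (I.mul_mem_left _ _ hzI) (I.mul_mem_right _ _ hzI))
        (smul_mem_tsi I _ hzI)
    have hw2 : h * (x a + ∑ j ∈ s', x j) - (x a + ∑ j ∈ s', x j) * h
        - ev a • (x a + ∑ j ∈ s', x j)
        = ∑ j ∈ s', (ev j - ev a) • x j := by
      have expand : h * (x a + ∑ j ∈ s', x j) - (x a + ∑ j ∈ s', x j) * h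
          - ev a • (x a + ∑ j ∈ s', x j)
          = (h * x a - x a * h - ev a • x a)
            + ∑ j ∈ s', (h * x j - x j * h - ev a • x j) := by
        rw [mul_add, add_mul, smul_add, Finset.mul_sum, Finset.sum_mul, Finset.smul_sum,
          Finset.sum_sub_distrib, Finset.sum_sub_distrib]
        abel
      rw [expand, he a (Finset.mem_insert_self a s'), sub_self, zero_add]
      refine Finset.sum_congr rfl fun j hj => ?_
      rw [he j (Finset.mem_insert_of_mem hj), sub_smul]
    have hmem : ∀ j ∈ s', (ev j - ev a) • x j ∈ I := by
      refine ih (fun j => (ev j - ev a) • x j)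
        (hinj.mono (Finset.coe_subset.2 (Finset.subset_insert a s')))
        (fun j hj => ?_) (by rw [← hw2]; exact hw)
      rw [mul_smul_comm, smul_mul_assoc, ← smul_sub, he j (Finset.mem_insert_of_mem hj),
        smul_comm]
    have hxj : ∀ j ∈ s', x j ∈ I := by
      intro j hj
      have hne : ev j - ev a ≠ 0 := by
        refine sub_ne_zero.2 fun hEq => ha ?_
        have hja : j = a := hinj (Finset.mem_coe.2 (Finset.mem_insert_of_mem hj))
          (Finset.mem_coe.2 (Finset.mem_insert_self a s')) hEq
        rwa [← hja]
      have := smul_mem_tsi I (ev j - ev a)⁻¹ (hmem j hj)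
      rwa [smul_smul, inv_mul_cancel₀ hne, one_smul] at this
    intro j hj
    rcases Finset.mem_insert.1 hj with rfl | hj'
    · have hxa : x j = (x j + ∑ j' ∈ s', x j') - ∑ j' ∈ s', x j' := by abel
      rw [hxa]
      exact I.sub_mem hzI (sum_mem fun j' hj' => hxj j' hj')
    · exact hxj j hj'

lemma eig_multi {n : ℕ} (I : TwoSidedIdeal A) (H : Fin n → A)
    (D : Finset (Fin n → ℤ)) : ∀ (x : (Fin n → ℤ) → A),
    (∀ d ∈ D, ∀ i, H i * x d - x d * H i = ((d i : ℤ) : K) • x d) →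
    (∑ d ∈ D, x d) ∈ I → ∀ d ∈ D, x d ∈ I := by
  classical
  induction D using Finset.strongInduction with
  | _ D ih =>
    intro x he hs d hd
    by_cases hone : ∀ d₁ ∈ D, ∀ d₂ ∈ D, d₁ = d₂
    · have hsum : ∑ d' ∈ D, x d' = x d := Finset.sum_eq_single_of_mem d hd
        (fun b hb hne => absurd (hone b hb d hd) hne)
      rw [← hsum]; exact hs
    · push_neg at hone
      obtain ⟨d₁, hd₁, d₂, hd₂, hne12⟩ := hone
      obtain ⟨i, hi⟩ := Function.ne_iff.1 hne12
      have hy : ∀ k ∈ D.image (fun e : Fin n → ℤ => e i),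
          (∑ e ∈ D.filter (fun e => e i = k), x e) ∈ I := by
        refine eig_single I (H i) (fun k : ℤ => ((k : ℤ) : K))
          (D.image (fun e : Fin n → ℤ => e i))
          (fun k => ∑ e ∈ D.filter (fun e => e i = k), x e)
          (fun k₁ _ k₂ _ hEq => by simp only [] at hEq; exact_mod_cast hEq)
          (fun k hk => ?_) ?_
        · rw [Finset.mul_sum, Finset.sum_mul, ← Finset.sum_sub_distrib, Finset.smul_sum]
          refine Finset.sum_congr rfl fun e heD => ?_
          rw [Finset.mem_filter] at heD
          rw [he e heD.1 i, heD.2]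
        · rw [Finset.sum_fiberwise_of_maps_to (fun e heD => Finset.mem_image_of_mem _ heD) x]
          exact hs
      have hfib : (D.filter (fun e => e i = d i)) ⊂ D := by
        rw [Finset.filter_ssubset]
        by_cases hk : d₁ i = d i
        · exact ⟨d₂, hd₂, fun hh => hi (by rw [hh, hk])⟩
        · exact ⟨d₁, hd₁, hk⟩
      exact ih _ hfib x (fun e heD i' => he e (Finset.mem_filter.1 heD).1 i')
        (hy (d i) (Finset.mem_image_of_mem _ hd)) d (Finset.mem_filter.2 ⟨hd, rfl⟩)

end EIG

end St19

namespace St19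

variable {K : Type*} [Field K] [CharZero K] {n : ℕ}

lemma fsum_split (v : Fin n →₀ ℕ) (i : Fin n) (h : v i ≠ 0) :
    (v.sum fun _ k => k) = ((v - Finsupp.single i 1).sum fun _ k => k) + 1 ∧
      v = (v - Finsupp.single i 1) + Finsupp.single i 1 := by
  have hsplit : v = (v - Finsupp.single i 1) + Finsupp.single i 1 := by
    ext j
    rw [Finsupp.add_apply, Finsupp.tsub_apply, Finsupp.single_apply]
    by_cases hj : i = j
    · subst hj; rw [if_pos rfl]; omega
    · rw [if_neg hj]; omega
  constructor
  · conv_lhs => rw [hsplit]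
    rw [Finsupp.sum_add_index' (fun _ => rfl) (fun _ _ _ => rfl),
      Finsupp.sum_single_index rfl]
  · exact hsplit

lemma key (M : ℕ) : ∀ (u v : Fin n →₀ ℕ) (T : Module.End K (MvPolynomial (Fin n) K)),
    ((u.sum fun _ k => k) + (v.sum fun _ k => k) = M) → Hmg u v T → ∀ hT : T ∈ IDO K n,
    ∃ S : Module.End K (MvPolynomial (Fin n) K), ∃ hS : S ∈ IDO K n, Adj K T S ∧
      ∀ I : TwoSidedIdeal (IDO K n),
        (⟨T, hT⟩ : IDO K n) ∈ I → (⟨S, hS⟩ : IDO K n) ∈ I := by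
  induction M using Nat.strong_induction_on with
  | _ M ih =>
    intro u v T hM hH hT
    by_cases hu : u = 0
    · by_cases hv : v = 0
      · subst hu hv
        exact ⟨T, hT, adj_diag hH, fun I hI => hI⟩
      · obtain ⟨i, hi⟩ := Finsupp.support_nonempty_iff.2 hv
        have hvi : v i ≠ 0 := Finsupp.mem_support_iff.1 hi
        obtain ⟨hsum, hsplit⟩ := fsum_split v i hvi
        set v' := v - Finsupp.single i 1 with hv'
        have hT6mem : intOp K n i * T ∈ IDO K n :=
          Subalgebra.mul_mem _ (intElt K n i).2 hT
        have hT6H : Hmg u v' (intOp K n i * T) := by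
          have h1 : Hmg (Finsupp.single i 1 + u) (0 + v) (intOp K n i * T) :=
            hmg_mul (hmg_int i) hH
          rw [zero_add] at h1
          have h2 : Hmg (u + Finsupp.single i 1) (v' + Finsupp.single i 1)
              (intOp K n i * T) := by
            rwa [add_comm u, ← hsplit]
          exact hmg_pad.1 h2
        have hlt : (u.sum fun _ k => k) + (v'.sum fun _ k => k) < M := by omega
        obtain ⟨S₆, hS₆, hadj₆, hid₆⟩ := ih _ hlt u v' (intOp K n i * T) rfl hT6H hT6mem
        have hrec : T = dOp K n i * (intOp K n i * T) := by
          rw [← mul_assoc, dOp_mul_intOp, one_mul]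
        refine ⟨S₆ * intOp K n i, Subalgebra.mul_mem _ hS₆ (intElt K n i).2, ?_, ?_⟩
        · have := adj_mul (adj_d_int i) hadj₆
          rwa [← hrec] at this
        · intro I hI
          have h1 : (⟨intOp K n i * T, hT6mem⟩ : IDO K n) ∈ I :=
            I.mul_mem_left (intElt K n i) ⟨T, hT⟩ hI
          have h2 := hid₆ I h1
          exact I.mul_mem_right (⟨S₆, hS₆⟩ : IDO K n) (intElt K n i) h2
    · obtain ⟨i, hi⟩ := Finsupp.support_nonempty_iff.2 hu
      have hui : u i ≠ 0 := Finsupp.mem_support_iff.1 hi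
      obtain ⟨hsum, hsplit⟩ := fsum_split u i hui
      set u' := u - Finsupp.single i 1 with hu'
      have hT4mem : T * dOp K n i ∈ IDO K n :=
        Subalgebra.mul_mem _ hT (dElt K n i).2
      have hT4H : Hmg u' v (T * dOp K n i) := by
        have h1 : Hmg (u + 0) (v + Finsupp.single i 1) (T * dOp K n i) :=
          hmg_mul hH (hmg_d i)
        rw [add_zero] at h1
        have h2 : Hmg (u' + Finsupp.single i 1) (v + Finsupp.single i 1)
            (T * dOp K n i) := by
          rwa [← hsplit]
        exact hmg_pad.1 h2
      have hlt : (u'.sum fun _ k => k) + (v.sum fun _ k => k) < M := by omega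
      obtain ⟨S₄, hS₄, hadj₄, hid₄⟩ := ih _ hlt u' v (T * dOp K n i) rfl hT4H hT4mem
      have hrec : T = (T * dOp K n i) * intOp K n i := by
        rw [mul_assoc, dOp_mul_intOp, mul_one]
      refine ⟨dOp K n i * S₄, Subalgebra.mul_mem _ (dElt K n i).2 hS₄, ?_, ?_⟩
      · have := adj_mul hadj₄ (adj_int_d i)
        rwa [← hrec] at this
      · intro I hI
        have h1 : (⟨T * dOp K n i, hT4mem⟩ : IDO K n) ∈ I :=
          I.mul_mem_right ⟨T, hT⟩ (dElt K n i) hI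
        have h2 := hid₄ I h1
        exact I.mul_mem_left (dElt K n i) (⟨S₄, hS₄⟩ : IDO K n) h2

end St19

namespace St19

variable {K : Type*} [Field K] [CharZero K] {n : ℕ}

lemma star_exists (T : Module.End K (MvPolynomial (Fin n) K)) (hT : T ∈ IDO K n) :
    ∃ S, ∃ hS : S ∈ IDO K n, Adj K T S ∧
      ∀ I : TwoSidedIdeal (IDO K n),
        (⟨T, hT⟩ : IDO K n) ∈ I → (⟨S, hS⟩ : IDO K n) ∈ I := by
  classical
  obtain ⟨D, f, hf, hf0, rfl⟩ := nice_of_mem hT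
  choose u v hd hH using fun d => (hf d).1
  have hkey := fun d => key (((u d).sum fun _ k => k) + ((v d).sum fun _ k => k))
    (u d) (v d) (f d) rfl (hH d) (hf d).2
  choose S hS hadj hid using hkey
  refine ⟨∑ d ∈ D, S d, Subalgebra.sum_mem _ (fun d _ => hS d),
    adj_sum D f S (fun d _ => hadj d), ?_⟩
  intro I hI
  have hcomp : ∀ d ∈ D, (⟨f d, (hf d).2⟩ : IDO K n) ∈ I := by
    refine eig_multi (K := K) I (fun i => xElt K n i * dElt K n i) D
      (fun d => ⟨f d, (hf d).2⟩) ?_ ?_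
    · intro d hdD i
      have hc := commutator_of_hmg (hH d) i
      have hcast : (((u d) i : ℕ) : K) - (((v d) i : ℕ) : K) = ((d i : ℤ) : K) := by
        have h1 := hd d i
        push_cast [← h1]
        ring
      rw [hcast] at hc
      exact Subtype.ext hc
    · have hsub : (∑ d ∈ D, (⟨f d, (hf d).2⟩ : IDO K n)) = ⟨∑ d ∈ D, f d, hT⟩ := by
        apply Subtype.ext
        simp
      rw [hsub]
      exact hI
  have hsub2 : (⟨∑ d ∈ D, S d, Subalgebra.sum_mem _ (fun d _ => hS d)⟩ : IDO K n)
      = ∑ d ∈ D, (⟨S d, hS d⟩ : IDO K n) := by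
    apply Subtype.ext
    simp
  rw [hsub2]
  exact sum_mem fun d hdD => hid d I (hcomp d hdD)

noncomputable def starFun (a : IDO K n) : IDO K n :=
  ⟨(star_exists a.1 a.2).choose, (star_exists a.1 a.2).choose_spec.choose⟩

lemma starFun_adj (a : IDO K n) : Adj K a.1 (starFun a).1 :=
  (star_exists a.1 a.2).choose_spec.choose_spec.1

lemma starFun_ideal (a : IDO K n) (I : TwoSidedIdeal (IDO K n)) (h : a ∈ I) :
    starFun a ∈ I :=
  (star_exists a.1 a.2).choose_spec.choose_spec.2 I h

lemma starFun_eq {a S : IDO K n} (h : Adj K a.1 S.1) : starFun a = S :=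
  Subtype.ext (adj_unique (starFun_adj a) h)

lemma starFun_add (a b : IDO K n) : starFun (a + b) = starFun a + starFun b :=
  starFun_eq (adj_add (starFun_adj a) (starFun_adj b))

lemma starFun_mul (a b : IDO K n) : starFun (a * b) = starFun b * starFun a :=
  starFun_eq (adj_mul (starFun_adj a) (starFun_adj b))

lemma starFun_invol (a : IDO K n) : starFun (starFun a) = a :=
  starFun_eq (adj_symm (starFun_adj a))

lemma starFun_algebraMap (r : K) :
    starFun (algebraMap K (IDO K n) r) = algebraMap K (IDO K n) r := by
  refine starFun_eq ?_
  have hval : ((algebraMap K (IDO K n) r : IDO K n) : Module.End K (MvPolynomial (Fin n) K))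
      = r • 1 := by
    rw [← Algebra.algebraMap_eq_smul_one]
    rfl
  rw [hval]
  exact adj_smul r adj_one

lemma starFun_d (i : Fin n) : starFun (dElt K n i) = intElt K n i :=
  starFun_eq (adj_d_int i)

lemma starFun_int (i : Fin n) : starFun (intElt K n i) = dElt K n i :=
  starFun_eq (adj_int_d i)

lemma starFun_x (i : Fin n) :
    starFun (xElt K n i) = dElt K n i * xElt K n i * dElt K n i :=
  starFun_eq (adj_x i)

lemma dElt_mul_intElt (i : Fin n) : dElt K n i * intElt K n i = 1 :=
  Subtype.ext (dOp_mul_intOp i)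

open MulOpposite in
noncomputable def phi : IDO K n ≃ₐ[K] (IDO K n)ᵐᵒᵖ where
  toFun a := op (starFun a)
  invFun b := starFun (unop b)
  left_inv a := by simp [starFun_invol]
  right_inv b := by simp [starFun_invol]
  map_mul' a b := by
    show op (starFun (a * b)) = op (starFun a) * op (starFun b)
    rw [starFun_mul]
    rfl
  map_add' a b := by
    show op (starFun (a + b)) = op (starFun a) + op (starFun b)
    rw [starFun_add]
    rfl
  commutes' r := by
    show op (starFun (algebraMap K (IDO K n) r)) = algebraMap K (IDO K n)ᵐᵒᵖ r
    rw [starFun_algebraMap]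
    rfl

end St19


open MulOpposite in
/-- There is an involutive `K`-algebra isomorphism `φ : I_n → (I_n)ᵒᵖ` (an anti-automorphism
of `I_n`) with `φ(∂_i) = ∫_i`, `φ(∫_i) = ∂_i` and `φ(∂_i∘X_i) = ∂_i∘X_i`, and `φ` maps every
two-sided ideal of `I_n` onto itself. In particular `I_n` is self-dual. -/
theorem statement19 (K : Type*) [Field K] [CharZero K] (n : ℕ) :
    ∃ φ : IDO K n ≃ₐ[K] (IDO K n)ᵐᵒᵖ,
      (∀ i : Fin n, φ (dElt K n i) = op (intElt K n i)) ∧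
      (∀ i : Fin n, φ (intElt K n i) = op (dElt K n i)) ∧
      (∀ i : Fin n, φ (dElt K n i * xElt K n i) = op (dElt K n i * xElt K n i)) ∧
      (∀ a : IDO K n, unop (φ (unop (φ a))) = a) ∧
      (∀ (I : TwoSidedIdeal (IDO K n)) (x : IDO K n), x ∈ I ↔ unop (φ x) ∈ I) := by
  refine ⟨St19.phi, fun i => ?_, fun i => ?_, fun i => ?_, fun a => ?_, fun I x => ?_⟩
  · show op (St19.starFun (dElt K n i)) = op (intElt K n i)
    rw [St19.starFun_d]
  · show op (St19.starFun (intElt K n i)) = op (dElt K n i)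
    rw [St19.starFun_int]
  · show op (St19.starFun (dElt K n i * xElt K n i)) = op (dElt K n i * xElt K n i)
    rw [St19.starFun_mul, St19.starFun_x, St19.starFun_d, mul_assoc,
      St19.dElt_mul_intElt, mul_one]
  · show St19.starFun (St19.starFun a) = a
    rw [St19.starFun_invol]
  · constructor
    · intro h
      exact St19.starFun_ideal x I h
    · intro h
      have h2 := St19.starFun_ideal _ I h
      have h3 : St19.starFun (unop (St19.phi x)) = x := St19.starFun_invol x
      rwa [h3] at h2
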